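/- For a pseudo-ball B of height r and f ∈ ℂ[[x,y]] with ord f(0,y) = n finite and 1 < n, if k < deg F_B(z) then (d^k/dz^k) F_B(z) = constant · ∏_{γ_j ∈ B ∩ Zer ∂^k f/∂y^k} (z − lc_B γ_j), where γ_j runs over the Newton–Puiseux roots of ∂^k f/∂y^k lying in B. -/

import Mathlib

attribute [local instance] Classical.propDecidable

open Polynomial

/-!
STATEMENT 13 (Lemma on derivatives of `F_B`).  Power series
`f ∈ ℂ[[x,y]]` are modelled as `PowerSeries (PowerSeries ℂ)` (`y`-series
with coefficients in `ℂ[[x]]`), and Puiseux series by coefficient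
functions `ℚ → ℂ`.  `stretchF m f` is the image of `f` in
`ℂ[[x^{1/m}]][[y]]` (i.e. `x ↦ x^m` on coefficients), and the
Newton–Puiseux factorizations of `f` and of `∂^k f/∂y^k` are given as
hypotheses, with roots `αs`, `γs` lying in `ℂ[[x^{1/m}]]`.  For a
pseudo-ball `B` of height `r` with `k < deg F_B`,
`(d^k/dz^k) F_B(z) = c·∏_{γⱼ ∈ B}(z − lc_B γⱼ)` for a nonzero constant
`c`, where `F_B(z) = ∏_{αⱼ ∈ B}(z − lc_B αⱼ)` and `lc_B γ = γ r`.
-/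

abbrev PSer : Type := ℚ → ℂ

def contGe (φ ψ : PSer) (r : ℚ) : Prop := ∀ q : ℚ, q < r → φ q = ψ q

def pball (β : PSer) (r : ℚ) : Set PSer := {ψ | contGe β ψ r}

def hasDen (m : ℕ) (φ : PSer) : Prop := ∀ q : ℚ, φ q ≠ 0 → ∃ i : ℕ, q = (i : ℚ) / m

def posOrder (φ : PSer) : Prop := ∀ q : ℚ, q ≤ 0 → φ q = 0

/-- The power series `Σᵢ φ(i/m)·t^i`, i.e. `φ ∈ ℂ[[x^{1/m}]]` written in the
variable `t = x^{1/m}`. -/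
noncomputable def toPS (m : ℕ) (φ : PSer) : PowerSeries ℂ :=
  PowerSeries.mk fun i => φ ((i : ℚ) / m)

/-- `ℂ[[x]] → ℂ[[x^{1/m}]]`, substituting `x = t^m`. -/
noncomputable def stretch (m : ℕ) (c : PowerSeries ℂ) : PowerSeries ℂ :=
  PowerSeries.mk fun i => if m ∣ i then PowerSeries.coeff (R := ℂ) (i / m) c else 0

/-- `ℂ[[x]][[y]] → ℂ[[x^{1/m}]][[y]]`, substituting `x = t^m` in each
coefficient. -/
noncomputable def stretchF (m : ℕ) (f : PowerSeries (PowerSeries ℂ)) :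
    PowerSeries (PowerSeries ℂ) :=
  PowerSeries.mk fun j => stretch m (PowerSeries.coeff (R := PowerSeries ℂ) j f)

namespace S13
open PowerSeries

variable {A : Type*} [CommRing A]

lemma coeff_mul_low {a b : PowerSeries A} {p q : ℕ}
    (ha : ∀ i < p, coeff (R := A) i a = 0) (hb : ∀ i < q, coeff (R := A) i b = 0) :
    (∀ i < p + q, coeff (R := A) i (a * b) = 0) ∧
      coeff (R := A) (p + q) (a * b) = coeff (R := A) p a * coeff (R := A) q b := by
  constructor
  · intro i hi
    rw [PowerSeries.coeff_mul]
    refine Finset.sum_eq_zero fun x hx => ?_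
    rw [Finset.HasAntidiagonal.mem_antidiagonal] at hx
    rcases lt_or_ge x.1 p with h | h
    · rw [ha _ h, zero_mul]
    · have : x.2 < q := by omega
      rw [hb _ this, mul_zero]
  · rw [PowerSeries.coeff_mul]
    refine Finset.sum_eq_single (p, q) (fun x hx hne => ?_) (fun h => ?_)
    · rw [Finset.HasAntidiagonal.mem_antidiagonal] at hx
      rcases lt_or_ge x.1 p with h | h
      · rw [ha _ h, zero_mul]
      · have : x.2 < q := by
          rcases lt_or_eq_of_le h with h' | h'
          · omega
          · exfalso; apply hne; cases x; simp at h' ⊢; omega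
        rw [hb _ this, mul_zero]
    · simp [Finset.HasAntidiagonal.mem_antidiagonal] at h

lemma coeff_prod_low {ι : Type*} (s : Finset ι) (ps : ι → ℕ) (as : ι → PowerSeries A)
    (h : ∀ j ∈ s, ∀ i < ps j, coeff (R := A) i (as j) = 0) :
    (∀ i < ∑ j ∈ s, ps j, coeff (R := A) i (∏ j ∈ s, as j) = 0) ∧
      coeff (R := A) (∑ j ∈ s, ps j) (∏ j ∈ s, as j) = ∏ j ∈ s, coeff (R := A) (ps j) (as j) := by
  induction s using Finset.cons_induction with
  | empty =>
      refine ⟨fun i hi => absurd hi (by simp), by simp⟩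
  | cons j s hj ih =>
      rw [Finset.sum_cons, Finset.prod_cons, Finset.prod_cons]
      have ih' := ih (fun j hj => h j (Finset.mem_cons_of_mem hj))
      have hj' := h j (Finset.mem_cons_self j s)
      have := coeff_mul_low (a := as j) (b := ∏ i ∈ s, as i) hj' ih'.1
      exact ⟨this.1, by rw [this.2, ih'.2]⟩

lemma pow_low {W : PowerSeries A} (hW : constantCoeff (R := A) W = 0) (j : ℕ) :
    ∀ i < j, coeff (R := A) i (W ^ j) = 0 := by
  induction j with
  | zero => intro i hi; omega
  | succ j ih =>
      intro i hi
      have h1 : ∀ i < 1, coeff (R := A) i W = 0 := by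
        intro i hi; interval_cases i; simpa using hW
      have := (coeff_mul_low (p := 1) (q := j) h1 ih).1 i (by omega)
      rw [pow_succ, mul_comm]; exact this


lemma coeff_stretch (m i : ℕ) (c : PowerSeries ℂ) :
    coeff (R := ℂ) i (stretch m c) = if m ∣ i then coeff (R := ℂ) (i / m) c else 0 :=
  coeff_mk _ _

lemma stretch_one {m : ℕ} (hm : 0 < m) : stretch m 1 = 1 := by
  ext i
  rw [coeff_stretch]
  by_cases h : m ∣ i
  · rcases h with ⟨a, rfl⟩
    rw [if_pos ⟨a, rfl⟩, Nat.mul_div_cancel_left _ hm, PowerSeries.coeff_one,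
      PowerSeries.coeff_one]
    by_cases ha : a = 0
    · simp [ha]
    · rw [if_neg ha, if_neg (Nat.mul_ne_zero hm.ne' ha)]
  · rw [if_neg h, PowerSeries.coeff_one, if_neg (by rintro rfl; exact h (dvd_zero m))]

lemma stretch_add (m : ℕ) (a b : PowerSeries ℂ) :
    stretch m (a + b) = stretch m a + stretch m b := by
  ext i
  simp only [coeff_stretch, map_add]
  split <;> simp

lemma stretch_mul {m : ℕ} (hm : 0 < m) (a b : PowerSeries ℂ) :
    stretch m (a * b) = stretch m a * stretch m b := by
  ext i
  rw [PowerSeries.coeff_mul, coeff_stretch]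
  by_cases h : m ∣ i
  · obtain ⟨i', rfl⟩ := h
    rw [if_pos ⟨i', rfl⟩, Nat.mul_div_cancel_left _ hm, PowerSeries.coeff_mul]
    rw [← Finset.sum_filter_of_ne
      (p := fun x : ℕ × ℕ => m ∣ x.1)
      (f := fun x : ℕ × ℕ => coeff (R := ℂ) x.1 (stretch m a) * coeff (R := ℂ) x.2 (stretch m b))
      (s := Finset.HasAntidiagonal.antidiagonal (m * i'))
      (by
        intro x hx hne
        by_contra hdvd
        apply hne
        show coeff (R := ℂ) x.1 (stretch m a) * coeff (R := ℂ) x.2 (stretch m b) = 0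
        rw [coeff_stretch, if_neg hdvd, zero_mul])]
    refine Finset.sum_nbij' (fun y => (m * y.1, m * y.2)) (fun x => (x.1 / m, x.2 / m))
      ?_ ?_ ?_ ?_ ?_
    · intro y hy
      rw [Finset.HasAntidiagonal.mem_antidiagonal] at hy
      refine Finset.mem_filter.2 ⟨Finset.HasAntidiagonal.mem_antidiagonal.2 (by rw [← Nat.mul_add, hy]),
        ⟨y.1, rfl⟩⟩
    · intro x hx
      obtain ⟨hx1, h1⟩ := Finset.mem_filter.1 hx
      rw [Finset.HasAntidiagonal.mem_antidiagonal] at hx1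
      have h2 : m ∣ x.2 := (Nat.dvd_add_right h1).1 (hx1 ▸ ⟨i', rfl⟩)
      obtain ⟨a1, ha1⟩ := h1; obtain ⟨a2, ha2⟩ := h2
      rw [Finset.HasAntidiagonal.mem_antidiagonal]
      show x.1 / m + x.2 / m = i'
      rw [ha1, ha2, Nat.mul_div_cancel_left _ hm, Nat.mul_div_cancel_left _ hm]
      rw [ha1, ha2, ← Nat.mul_add] at hx1
      exact Nat.eq_of_mul_eq_mul_left hm hx1
    · intro y _; simp [Nat.mul_div_cancel_left _ hm]
    · intro x hx
      obtain ⟨hx1, h1⟩ := Finset.mem_filter.1 hx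
      rw [Finset.HasAntidiagonal.mem_antidiagonal] at hx1
      have h2 : m ∣ x.2 := (Nat.dvd_add_right h1).1 (hx1 ▸ ⟨i', rfl⟩)
      exact Prod.ext (Nat.mul_div_cancel' h1) (Nat.mul_div_cancel' h2)
    · intro y hy
      rw [coeff_stretch, coeff_stretch, if_pos ⟨y.1, rfl⟩, if_pos ⟨y.2, rfl⟩,
        Nat.mul_div_cancel_left _ hm, Nat.mul_div_cancel_left _ hm]
  · rw [if_neg h]
    refine (Finset.sum_eq_zero fun x hx => ?_).symm
    rw [Finset.HasAntidiagonal.mem_antidiagonal] at hx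
    by_cases h1 : m ∣ x.1
    · have h2 : ¬ m ∣ x.2 := fun h2 => h (hx ▸ Nat.dvd_add h1 h2)
      have : coeff (R := ℂ) x.2 (stretch m b) = 0 := by rw [coeff_stretch, if_neg h2]
      rw [this, mul_zero]
    · have : coeff (R := ℂ) x.1 (stretch m a) = 0 := by rw [coeff_stretch, if_neg h1]
      rw [this, zero_mul]

noncomputable def stretchHom (m : ℕ) (hm : 0 < m) : PowerSeries ℂ →+* PowerSeries ℂ where
  toFun := stretch m
  map_one' := stretch_one hm
  map_mul' := stretch_mul hm
  map_zero' := by ext i; rw [coeff_stretch]; simp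
  map_add' := stretch_add m

lemma stretch_stretch {d m : ℕ} (hd : 0 < d) (hm : 0 < m) (c : PowerSeries ℂ) :
    stretch d (stretch m c) = stretch (m * d) c := by
  ext i
  rw [coeff_stretch]
  by_cases h : d ∣ i
  · obtain ⟨i', rfl⟩ := h
    rw [if_pos ⟨i', rfl⟩, Nat.mul_div_cancel_left _ hd, coeff_stretch, coeff_stretch]
    by_cases h2 : m ∣ i'
    · obtain ⟨i'', rfl⟩ := h2
      rw [if_pos ⟨i'', rfl⟩,
        if_pos (show m * d ∣ d * (m * i'') from ⟨i'', by ring⟩), Nat.mul_div_cancel_left _ hm]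
      congr 1
      rw [show d * (m * i'') = (m * d) * i'' by ring,
        Nat.mul_div_cancel_left _ (Nat.mul_pos hm hd)]
    · rw [if_neg h2, if_neg]
      rintro ⟨a, ha⟩
      refine h2 ⟨a, Nat.eq_of_mul_eq_mul_left hd ?_⟩
      rw [ha]; ring
  · rw [if_neg h, coeff_stretch,
      if_neg (fun hdvd => h (dvd_trans (⟨m, mul_comm m d⟩ : d ∣ m * d) hdvd))]

lemma stretch_toPS {d m : ℕ} (hd : 0 < d) (hm : 0 < m) (φ : PSer) (hφ : hasDen m φ) :
    stretch d (toPS m φ) = toPS (m * d) φ := by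
  ext i
  rw [coeff_stretch, toPS, toPS, coeff_mk]
  by_cases h : d ∣ i
  · obtain ⟨i', rfl⟩ := h
    rw [if_pos ⟨i', rfl⟩, Nat.mul_div_cancel_left _ hd, coeff_mk]
    congr 1
    push_cast
    rw [div_eq_div_iff (by positivity) (by positivity)]
    push_cast; ring
  · rw [if_neg h, coeff_mk]
    by_contra hne
    obtain ⟨i₀, hi₀⟩ := hφ _ (Ne.symm hne)
    apply h
    rw [div_eq_div_iff (by positivity) (by exact_mod_cast hm.ne')] at hi₀
    push_cast at hi₀
    have hiq : (i : ℚ) = i₀ * d := by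
      have hm' : (m : ℚ) ≠ 0 := by positivity
      refine mul_right_cancel₀ hm' ?_
      linear_combination hi₀
    have : i = i₀ * d := by exact_mod_cast hiq
    exact ⟨i₀, this.trans (mul_comm i₀ d)⟩

lemma stretchF_eq_map (m : ℕ) (hm : 0 < m) (f : PowerSeries (PowerSeries ℂ)) :
    stretchF m f = PowerSeries.map (stretchHom m hm) f := by
  ext j
  rw [stretchF, coeff_mk, PowerSeries.coeff_map]; rfl

lemma coeff_derivativeFun' {R : Type*} [CommRing R] (f : PowerSeries R) (n : ℕ) :
    PowerSeries.coeff n (PowerSeries.derivativeFun f) = PowerSeries.coeff (n + 1) f * (n + 1) :=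
  PowerSeries.coeff_derivative f n

lemma map_derivativeFun {R S : Type*} [CommRing R] [CommRing S] (σ : R →+* S)
    (h : PowerSeries R) :
    PowerSeries.map σ (PowerSeries.derivativeFun h) =
      PowerSeries.derivativeFun (PowerSeries.map σ h) := by
  ext j
  rw [PowerSeries.coeff_map, coeff_derivativeFun', coeff_derivativeFun',
    PowerSeries.coeff_map, map_mul, map_add, map_natCast, map_one]



lemma stretchHom_apply (m : ℕ) (hm : 0 < m) (c : PowerSeries ℂ) :
    stretchHom m hm c = stretch m c := rfl

lemma map_derivativeFun_iter {R S : Type*} [CommRing R] [CommRing S] (σ : R →+* S)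
    (k : ℕ) (h : PowerSeries R) :
    PowerSeries.map σ (PowerSeries.derivativeFun^[k] h) =
      PowerSeries.derivativeFun^[k] (PowerSeries.map σ h) := by
  induction k generalizing h with
  | zero => simp
  | succ k ih =>
      rw [Function.iterate_succ_apply', Function.iterate_succ_apply',
        map_derivativeFun, ih]


noncomputable def iT : PowerSeries ℂ →+* PowerSeries (Polynomial ℂ) :=
  PowerSeries.map (Polynomial.C)

lemma coeff_iT (a : PowerSeries ℂ) (i : ℕ) :
    coeff (R := Polynomial ℂ) i (iT a) = Polynomial.C (coeff (R := ℂ) i a) := by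
  simp [iT, PowerSeries.coeff_map]

noncomputable def Phi (W : PowerSeries (Polynomial ℂ)) (h : PowerSeries (PowerSeries ℂ)) :
    PowerSeries (Polynomial ℂ) :=
  PowerSeries.mk fun i => coeff (R := Polynomial ℂ) i
    (∑ j ∈ Finset.range (i + 1), iT (coeff (R := PowerSeries ℂ) j h) * W ^ j)

variable {W : PowerSeries (Polynomial ℂ)}

lemma term_low (hW : constantCoeff (R := Polynomial ℂ) W = 0) (a : PowerSeries ℂ) (j : ℕ) :
    ∀ i < j, coeff (R := Polynomial ℂ) i (iT a * W ^ j) = 0 := by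
  intro i hi
  have := (coeff_mul_low (p := 0) (q := j) (a := iT a) (b := W ^ j)
    (fun i hi => absurd hi (by omega)) (pow_low hW j)).1
  exact this i (by omega)

lemma coeff_Phi (hW : constantCoeff (R := Polynomial ℂ) W = 0)
    (h : PowerSeries (PowerSeries ℂ)) (i M : ℕ) (hiM : i ≤ M) :
    coeff (R := Polynomial ℂ) i (Phi W h) =
      coeff (R := Polynomial ℂ) i
        (∑ j ∈ Finset.range (M + 1), iT (coeff (R := PowerSeries ℂ) j h) * W ^ j) := by
  rw [Phi, coeff_mk, map_sum, map_sum]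
  refine Finset.sum_subset (Finset.range_subset_range.2 (by omega)) (fun j hj hnj => ?_)
  rw [Finset.mem_range] at hj hnj
  exact term_low hW _ j i (by omega)

lemma Phi_one : Phi W 1 = 1 := by
  refine PowerSeries.ext fun i => ?_
  rw [Phi, coeff_mk, map_sum]
  rw [Finset.sum_eq_single 0 (fun j _ hj => ?_) (fun h => absurd (Finset.mem_range.2 (by omega)) h)]
  · simp
  · rw [PowerSeries.coeff_one, if_neg hj]
    simp

lemma Phi_add (h₁ h₂ : PowerSeries (PowerSeries ℂ)) :
    Phi W (h₁ + h₂) = Phi W h₁ + Phi W h₂ := by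
  refine PowerSeries.ext fun i => ?_
  simp only [Phi, coeff_mk, map_add, add_mul, Finset.sum_add_distrib]

lemma Phi_mul (hW : constantCoeff (R := Polynomial ℂ) W = 0) (h₁ h₂ : PowerSeries (PowerSeries ℂ)) :
    Phi W (h₁ * h₂) = Phi W h₁ * Phi W h₂ := by
  refine PowerSeries.ext fun i => ?_
  set F : ℕ × ℕ → Polynomial ℂ := fun x =>
    coeff (R := Polynomial ℂ) i (iT (coeff (R := PowerSeries ℂ) x.1 h₁ * coeff (R := PowerSeries ℂ) x.2 h₂)
      * W ^ (x.1 + x.2)) with hF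
  have hFzero : ∀ x : ℕ × ℕ, i < x.1 + x.2 → F x = 0 := fun x hx =>
    term_low hW _ _ i hx
  have step1 : coeff (R := Polynomial ℂ) i (Phi W (h₁ * h₂)) =
      ∑ j ∈ Finset.range (i + 1), ∑ x ∈ Finset.HasAntidiagonal.antidiagonal j, F x := by
    rw [Phi, coeff_mk, map_sum]
    refine Finset.sum_congr rfl fun j _ => ?_
    rw [PowerSeries.coeff_mul j h₁ h₂, map_sum, Finset.sum_mul, map_sum]
    refine Finset.sum_congr rfl fun x hx => ?_
    rw [Finset.HasAntidiagonal.mem_antidiagonal] at hx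
    simp only [hF]
    rw [← hx]
  have hdisj : ((Finset.range (i + 1) : Finset ℕ) : Set ℕ).PairwiseDisjoint
      (fun j => (Finset.HasAntidiagonal.antidiagonal j : Finset (ℕ × ℕ))) := by
    intro a _ b _ hab
    simp only [Finset.disjoint_left]
    intro x hxa hxb
    rw [Finset.HasAntidiagonal.mem_antidiagonal] at hxa hxb
    exact hab (by omega)
  have step2 : ∑ j ∈ Finset.range (i + 1), ∑ x ∈ Finset.HasAntidiagonal.antidiagonal j, F x =
      ∑ x ∈ (Finset.range (i + 1)).biUnion (fun j => Finset.HasAntidiagonal.antidiagonal j), F x :=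
    (Finset.sum_biUnion hdisj).symm
  have hU : (Finset.range (i + 1)).biUnion (fun j => Finset.HasAntidiagonal.antidiagonal j) =
      (Finset.range (i + 1) ×ˢ Finset.range (i + 1)).filter (fun x => x.1 + x.2 ≤ i) := by
    ext x
    simp only [Finset.mem_biUnion, Finset.mem_range, Finset.HasAntidiagonal.mem_antidiagonal, Finset.mem_filter,
      Finset.mem_product]
    constructor
    · rintro ⟨j, hj, rfl⟩; omega
    · rintro ⟨⟨h1, h2⟩, h3⟩; exact ⟨x.1 + x.2, by omega, rfl⟩
  have step3 : ∑ x ∈ (Finset.range (i + 1) ×ˢ Finset.range (i + 1)).filter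
      (fun x => x.1 + x.2 ≤ i), F x =
      ∑ x ∈ Finset.range (i + 1) ×ˢ Finset.range (i + 1), F x :=
    Finset.sum_filter_of_ne (fun x _ hne => by
      by_contra hgt
      exact hne (hFzero x (by omega)))
  have hAB : (∑ j ∈ Finset.range (i + 1), iT (coeff (R := PowerSeries ℂ) j h₁) * W ^ j) *
      (∑ j ∈ Finset.range (i + 1), iT (coeff (R := PowerSeries ℂ) j h₂) * W ^ j) =
      ∑ x ∈ Finset.range (i + 1) ×ˢ Finset.range (i + 1),
        iT (coeff (R := PowerSeries ℂ) x.1 h₁ * coeff (R := PowerSeries ℂ) x.2 h₂) * W ^ (x.1 + x.2) := by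
    rw [Finset.sum_mul_sum, ← Finset.sum_product']
    refine Finset.sum_congr rfl fun x _ => ?_
    rw [map_mul, pow_add]; ring
  have step4 : coeff (R := Polynomial ℂ) i (Phi W h₁ * Phi W h₂) =
      ∑ x ∈ Finset.range (i + 1) ×ˢ Finset.range (i + 1), F x := by
    rw [PowerSeries.coeff_mul]
    have e1 : ∀ x ∈ Finset.HasAntidiagonal.antidiagonal i,
        coeff (R := Polynomial ℂ) x.1 (Phi W h₁) * coeff (R := Polynomial ℂ) x.2 (Phi W h₂) =
        coeff (R := Polynomial ℂ) x.1
          (∑ j ∈ Finset.range (i + 1), iT (coeff (R := PowerSeries ℂ) j h₁) * W ^ j) *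
        coeff (R := Polynomial ℂ) x.2
          (∑ j ∈ Finset.range (i + 1), iT (coeff (R := PowerSeries ℂ) j h₂) * W ^ j) := by
      intro x hx
      rw [Finset.HasAntidiagonal.mem_antidiagonal] at hx
      rw [coeff_Phi hW h₁ x.1 i (by omega), coeff_Phi hW h₂ x.2 i (by omega)]
    rw [Finset.sum_congr rfl e1, ← PowerSeries.coeff_mul i, hAB, map_sum]
  rw [step1, step2, hU, step3, step4]

noncomputable def PhiHom (W : PowerSeries (Polynomial ℂ))
    (hW : constantCoeff (R := Polynomial ℂ) W = 0) :
    PowerSeries (PowerSeries ℂ) →+* PowerSeries (Polynomial ℂ) where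
  toFun := Phi W
  map_one' := Phi_one
  map_mul' := Phi_mul hW
  map_zero' := by
    show Phi W 0 = 0
    refine PowerSeries.ext fun i => ?_
    rw [Phi, coeff_mk]
    rw [Finset.sum_eq_zero (fun j _ => by simp), map_zero]
  map_add' := Phi_add

lemma Phi_C (a : PowerSeries ℂ) : Phi W (PowerSeries.C (R := PowerSeries ℂ) a) = iT a := by
  refine PowerSeries.ext fun i => ?_
  rw [Phi, coeff_mk, map_sum]
  rw [Finset.sum_eq_single 0 (fun j _ hj => ?_) (fun h => absurd (Finset.mem_range.2 (by omega)) h)]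
  · simp
  · rw [PowerSeries.coeff_C, if_neg hj]
    simp

lemma Phi_X (hW : constantCoeff (R := Polynomial ℂ) W = 0) : Phi W PowerSeries.X = W := by
  refine PowerSeries.ext fun i => ?_
  rw [coeff_Phi hW _ i (i + 1) (by omega), map_sum]
  rw [Finset.sum_eq_single 1 (fun j _ hj => ?_)
    (fun h => absurd (Finset.mem_range.2 (by omega)) h)]
  · simp
  · rw [PowerSeries.coeff_X, if_neg hj]
    simp



lemma PhiHom_apply (W : PowerSeries (Polynomial ℂ))
    (hW : PowerSeries.constantCoeff (R := Polynomial ℂ) W = 0) (h : PowerSeries (PowerSeries ℂ)) :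
    PhiHom W hW h = Phi W h := rfl

lemma coeff_zero_Phi (W : PowerSeries (Polynomial ℂ)) (h : PowerSeries (PowerSeries ℂ)) :
    PowerSeries.coeff (R := Polynomial ℂ) 0 (Phi W h) =
      Polynomial.C (PowerSeries.constantCoeff (R := ℂ) (PowerSeries.constantCoeff (R := PowerSeries ℂ) h)) := by
  rw [Phi, PowerSeries.coeff_mk, Finset.range_one, Finset.sum_singleton, pow_zero, mul_one,
    coeff_iT]
  rw [PowerSeries.coeff_zero_eq_constantCoeff, PowerSeries.coeff_zero_eq_constantCoeff]

noncomputable def Dz (h : PowerSeries (Polynomial ℂ)) : PowerSeries (Polynomial ℂ) :=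
  PowerSeries.mk fun i => Polynomial.derivative (coeff (R := Polynomial ℂ) i h)

lemma coeff_Dz (h : PowerSeries (Polynomial ℂ)) (i : ℕ) :
    coeff (R := Polynomial ℂ) i (Dz h) = Polynomial.derivative (coeff (R := Polynomial ℂ) i h) :=
  coeff_mk _ _

lemma Dz_mul (a b : PowerSeries (Polynomial ℂ)) :
    Dz (a * b) = Dz a * b + a * Dz b := by
  refine PowerSeries.ext fun i => ?_
  rw [coeff_Dz, map_add, PowerSeries.coeff_mul, PowerSeries.coeff_mul, PowerSeries.coeff_mul,
    map_sum, ← Finset.sum_add_distrib]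
  refine Finset.sum_congr rfl fun x _ => ?_
  rw [Polynomial.derivative_mul, coeff_Dz, coeff_Dz]

lemma Dz_one : Dz 1 = 0 := by
  refine PowerSeries.ext fun i => ?_
  rw [coeff_Dz, PowerSeries.coeff_one]
  split <;> simp

lemma Dz_iT (a : PowerSeries ℂ) : Dz (iT a) = 0 := by
  refine PowerSeries.ext fun i => ?_
  rw [coeff_Dz, coeff_iT, Polynomial.derivative_C, map_zero]

lemma Dz_Xpow (M : ℕ) : Dz ((PowerSeries.X : PowerSeries (Polynomial ℂ)) ^ M) = 0 := by
  refine PowerSeries.ext fun i => ?_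
  rw [coeff_Dz, PowerSeries.coeff_X_pow, map_zero]
  split <;> simp

lemma Dz_Xpow_mul (M : ℕ) (s : PowerSeries (Polynomial ℂ)) :
    Dz ((PowerSeries.X : PowerSeries (Polynomial ℂ)) ^ M * s) = PowerSeries.X ^ M * Dz s := by
  rw [Dz_mul, Dz_Xpow, zero_mul, zero_add]

lemma Dz_pow (W : PowerSeries (Polynomial ℂ)) (j : ℕ) :
    Dz (W ^ (j + 1)) = ((j : PowerSeries (Polynomial ℂ)) + 1) * W ^ j * Dz W := by
  induction j with
  | zero => simp [Dz_mul, Dz_one]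
  | succ j ih =>
      rw [pow_succ, Dz_mul, ih]
      push_cast
      ring

lemma coeff_Xpow_mul_low (M i : ℕ) (hi : i < M) (s : PowerSeries (Polynomial ℂ)) :
    coeff (R := Polynomial ℂ) i ((PowerSeries.X : PowerSeries (Polynomial ℂ)) ^ M * s) = 0 := by
  have := (coeff_mul_low (p := M) (q := 0)
    (a := (PowerSeries.X : PowerSeries (Polynomial ℂ)) ^ M) (b := s)
    (fun i hi => by rw [PowerSeries.coeff_X_pow, if_neg (by omega)])
    (fun i hi => absurd hi (by omega))).1
  exact this i (by omega)

lemma Dz_Phi {W : PowerSeries (Polynomial ℂ)} {N : ℕ}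
    (hW : constantCoeff (R := Polynomial ℂ) W = 0)
    (hDzW : Dz W = (PowerSeries.X : PowerSeries (Polynomial ℂ)) ^ N)
    (h : PowerSeries (PowerSeries ℂ)) :
    Dz (Phi W h) = PowerSeries.X ^ N * Phi W (PowerSeries.derivativeFun h) := by
  refine PowerSeries.ext fun i => ?_
  rw [coeff_Dz, coeff_Phi hW h i (i + 1) (by omega), map_sum, map_sum]
  have e1 : ∀ j, Polynomial.derivative
      (coeff (R := Polynomial ℂ) i (iT (coeff (R := PowerSeries ℂ) j h) * W ^ j)) =
      coeff (R := Polynomial ℂ) i (iT (coeff (R := PowerSeries ℂ) j h) * Dz (W ^ j)) := fun j => by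
    rw [← coeff_Dz, Dz_mul, Dz_iT, zero_mul, map_add, map_zero, zero_add]
  rw [Finset.sum_congr rfl fun j _ => e1 j]
  rw [Finset.sum_range_succ' (fun j => coeff (R := Polynomial ℂ) i
    (iT (coeff (R := PowerSeries ℂ) j h) * Dz (W ^ j))) (i + 1)]
  have e0 : coeff (R := Polynomial ℂ) i (iT (coeff (R := PowerSeries ℂ) 0 h) * Dz (W ^ 0)) = 0 := by
    rw [pow_zero, Dz_one, mul_zero, map_zero]
  rw [e0, add_zero]
  have e2 : ∀ j : ℕ, iT (coeff (R := PowerSeries ℂ) (j + 1) h) * Dz (W ^ (j + 1)) =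
      PowerSeries.X ^ N * (iT (coeff (R := PowerSeries ℂ) j (PowerSeries.derivativeFun h)) * W ^ j) := by
    intro j
    rw [Dz_pow, hDzW, coeff_derivativeFun', map_mul, map_add, map_natCast, map_one]
    push_cast
    ring
  rw [Finset.sum_congr rfl fun j _ => congrArg (PowerSeries.coeff (R := Polynomial ℂ) i) (e2 j)]
  rcases lt_or_ge i N with hiN | hiN
  · rw [Finset.sum_eq_zero fun j _ => coeff_Xpow_mul_low N i hiN _,
      coeff_Xpow_mul_low N i hiN]
  · obtain ⟨i', rfl⟩ : ∃ i', i = N + i' := ⟨i - N, by omega⟩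
    have key : ∀ s, coeff (R := Polynomial ℂ) (N + i') ((PowerSeries.X :
        PowerSeries (Polynomial ℂ)) ^ N * s) = coeff (R := Polynomial ℂ) i' s := fun s => by
      rw [mul_comm, show N + i' = i' + N from by omega, PowerSeries.coeff_mul_X_pow]
    rw [key, coeff_Phi hW _ i' i' (le_refl _), map_sum]
    rw [Finset.sum_congr rfl fun j _ => key _]
    refine (Finset.sum_subset (Finset.range_subset_range.2 (by omega)) fun j hj hnj => ?_).symm
    rw [Finset.mem_range] at hj hnj
    exact term_low hW _ j i' (by omega)

lemma Dz_iter_Phi {W : PowerSeries (Polynomial ℂ)} {N : ℕ}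
    (hW : constantCoeff (R := Polynomial ℂ) W = 0)
    (hDzW : Dz W = (PowerSeries.X : PowerSeries (Polynomial ℂ)) ^ N)
    (g : PowerSeries (PowerSeries ℂ)) (k : ℕ) :
    Dz^[k] (Phi W g) = PowerSeries.X ^ (k * N) *
      Phi W (PowerSeries.derivativeFun^[k] g) := by
  induction k with
  | zero => simp
  | succ k ih =>
      rw [Function.iterate_succ_apply', ih, Dz_Xpow_mul, Dz_Phi hW hDzW,
        Function.iterate_succ_apply', ← mul_assoc, ← pow_add]
      ring_nf

lemma coeff_Dz_iter (s : PowerSeries (Polynomial ℂ)) (k i : ℕ) :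
    coeff (R := Polynomial ℂ) i (Dz^[k] s) =
      Polynomial.derivative^[k] (coeff (R := Polynomial ℂ) i s) := by
  induction k generalizing s with
  | zero => simp
  | succ k ih =>
      rw [Function.iterate_succ_apply, Function.iterate_succ_apply, ih, coeff_Dz]


noncomputable def lam (N m' : ℕ) (β : PSer) : PowerSeries ℂ :=
  PowerSeries.mk fun i => if 0 < i ∧ i < N then β ((i : ℚ) / m') else 0

noncomputable def Wd (N m' : ℕ) (β : PSer) : PowerSeries (Polynomial ℂ) :=
  iT (lam N m' β) + PowerSeries.X ^ N * PowerSeries.C (R := Polynomial ℂ) Polynomial.X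

lemma coeff_Wd (N m' : ℕ) (β : PSer) (i : ℕ) :
    coeff (R := Polynomial ℂ) i (Wd N m' β) =
      Polynomial.C (if 0 < i ∧ i < N then β ((i : ℚ) / m') else 0) +
        (if i = N then Polynomial.X else 0) := by
  rw [Wd, map_add, coeff_iT, lam, coeff_mk]
  congr 1
  rcases lt_or_ge i N with hi | hi
  · rw [coeff_Xpow_mul_low N i hi, if_neg (by omega)]
  · obtain ⟨i0, rfl⟩ : ∃ i0, i = N + i0 := ⟨i - N, by omega⟩
    rw [show N + i0 = i0 + N from by omega, mul_comm, PowerSeries.coeff_mul_X_pow,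
      PowerSeries.coeff_C]
    by_cases h0 : i0 = 0
    · subst h0; rw [if_pos rfl, if_pos (by omega)]
    · rw [if_neg h0, if_neg (by omega)]

lemma constantCoeff_Wd (N m' : ℕ) (hN : 0 < N) (β : PSer) :
    constantCoeff (R := Polynomial ℂ) (Wd N m' β) = 0 := by
  rw [← PowerSeries.coeff_zero_eq_constantCoeff_apply, coeff_Wd]
  rw [if_neg (by omega), if_neg (by omega)]
  simp

lemma Dz_Wd (N m' : ℕ) (β : PSer) :
    Dz (Wd N m' β) = (PowerSeries.X : PowerSeries (Polynomial ℂ)) ^ N := by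
  refine PowerSeries.ext fun i => ?_
  rw [coeff_Dz, coeff_Wd, PowerSeries.coeff_X_pow, map_add, Polynomial.derivative_C]
  by_cases h : i = N
  · rw [if_pos h, if_pos h, Polynomial.derivative_X, zero_add]
  · rw [if_neg h, if_neg h, map_zero, zero_add]

section factors

variable {N m' : ℕ} {β : PSer} {r : ℚ}

lemma factor_in (hm' : 0 < m') (hNq : (N : ℚ) = r * m') (hNpos : 0 < N)
    (φ : PSer) (hpos : posOrder φ) (hball : ∀ q < r, β q = φ q) :
    (∀ i < N, coeff (R := Polynomial ℂ) i (Wd N m' β - iT (toPS m' φ)) = 0) ∧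
      coeff (R := Polynomial ℂ) N (Wd N m' β - iT (toPS m' φ)) =
        Polynomial.X - Polynomial.C (φ r) := by
  have hm'q : (0 : ℚ) < m' := by exact_mod_cast hm'
  have hNr : ((N : ℚ)) / m' = r := by rw [hNq]; field_simp
  have hr0 : 0 < r := by
    rw [← hNr]; positivity
  constructor
  · intro i hi
    rw [map_sub, coeff_Wd, coeff_iT, toPS, coeff_mk, if_neg (by omega : ¬ i = N), add_zero,
      ← Polynomial.C_sub, Polynomial.C_eq_zero]
    by_cases h0 : 0 < i
    · rw [if_pos ⟨h0, hi⟩, hball ((i : ℚ) / m') (by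
        rw [← hNr, div_lt_div_iff₀ hm'q hm'q]
        have h2 : (i : ℚ) < N := by exact_mod_cast hi
        nlinarith), sub_self]
    · obtain rfl : i = 0 := by omega
      rw [if_neg (by omega)]
      have : φ ((0 : ℕ) / (m' : ℚ)) = 0 := by
        apply hpos; simp
      rw [this, sub_zero]
  · rw [map_sub, coeff_Wd, coeff_iT, toPS, coeff_mk, if_neg (by omega), if_pos rfl,
      Polynomial.C_0, zero_add, hNr]

lemma factor_out (hrpos : 0 < r) (hm' : 0 < m') (hNq : (N : ℚ) = r * m') (hNpos : 0 < N)
    (φ ψ : PSer) (hφden : hasDen m' φ) (hφpos : posOrder φ)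
    (hψden : hasDen m' ψ) (hψpos : posOrder ψ)
    (hψball : ∀ q < r, β q = ψ q)
    (hnot : ¬ (∀ q < r, β q = φ q)) :
    ∃ (e : ℕ) (c : ℂ), e < N ∧ c ≠ 0 ∧
      (∀ i < e, coeff (R := Polynomial ℂ) i (Wd N m' β - iT (toPS m' φ)) = 0) ∧
      coeff (R := Polynomial ℂ) e (Wd N m' β - iT (toPS m' φ)) = Polynomial.C c := by
  have hm'q : (0 : ℚ) < m' := by exact_mod_cast hm'
  have hNr : ((N : ℚ)) / m' = r := by rw [hNq]; field_simp
  push_neg at hnot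
  obtain ⟨q, hqr, hqne⟩ := hnot
  have hβ0 : ∀ q' : ℚ, q' ≤ 0 → β q' = 0 := fun q' hq' =>
    (hψball q' (lt_of_le_of_lt hq' hrpos)).trans (hψpos q' hq')
  have hkey : ∃ i : ℕ, i < N ∧ β ((i : ℚ) / m') ≠ φ ((i : ℚ) / m') := by
    have hq0 : 0 < q := by
      by_contra hq0
      push_neg at hq0
      exact hqne ((hβ0 q hq0).trans (hφpos q hq0).symm)
    have hform : ∃ i : ℕ, q = (i : ℚ) / m' := by
      by_cases hφq : φ q = 0
      · have hβq : β q ≠ 0 := by rw [hφq] at hqne; exact hqne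
        have hψq : ψ q ≠ 0 := by rw [← hψball q hqr]; exact hβq
        exact hψden q hψq
      · exact hφden q hφq
    obtain ⟨i, rfl⟩ := hform
    refine ⟨i, ?_, hqne⟩
    have h1 : (i : ℚ) < N := by
      rw [hNq]
      rw [div_lt_iff₀ hm'q] at hqr
      exact hqr
    exact_mod_cast h1
  classical
  let P : ℕ → Prop := fun i => i < N ∧ β ((i : ℚ) / m') ≠ φ ((i : ℚ) / m')
  have he := Nat.find_spec hkey
  set e := Nat.find hkey with hedef
  have hemin : ∀ i < e, ¬ (i < N ∧ β ((i : ℚ) / m') ≠ φ ((i : ℚ) / m')) :=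
    fun i hi => Nat.find_min hkey hi
  have he0 : 0 < e := by
    rcases Nat.eq_zero_or_pos e with h0 | h0
    · exfalso
      have := he
      rw [h0] at this
      refine this.2 ?_
      have h1 : ((0 : ℕ) : ℚ) / m' = 0 := by simp
      rw [h1, hβ0 0 le_rfl, hφpos 0 le_rfl]
    · exact h0
  refine ⟨e, β ((e : ℚ) / m') - φ ((e : ℚ) / m'), he.1, sub_ne_zero.2 he.2, ?_, ?_⟩
  · intro i hi
    rw [map_sub, coeff_Wd, coeff_iT, toPS, coeff_mk, if_neg (by omega : ¬ i = N), add_zero,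
      ← Polynomial.C_sub, Polynomial.C_eq_zero]
    by_cases h0 : 0 < i
    · rw [if_pos ⟨h0, by omega⟩]
      have := hemin i hi
      push_neg at this
      rw [this (by omega), sub_self]
    · obtain rfl : i = 0 := by omega
      rw [if_neg (by omega)]
      have : φ ((0 : ℕ) / (m' : ℚ)) = 0 := by apply hφpos; simp
      rw [this, sub_zero]
  · rw [map_sub, coeff_Wd, coeff_iT, toPS, coeff_mk, if_neg (by omega : ¬ e = N), add_zero,
      if_pos ⟨he0, he.1⟩, ← Polynomial.C_sub]

end factors

lemma iter_deriv_facts : ∀ (k : ℕ) (p : Polynomial ℂ), k < p.natDegree →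
    derivative^[k] p ≠ 0 ∧ (derivative^[k] p).natDegree = p.natDegree - k := by
  intro k
  induction k with
  | zero =>
      intro p hk
      refine ⟨fun h => by rw [Function.iterate_zero_apply] at h; rw [h, Polynomial.natDegree_zero] at hk; omega, by simp⟩
  | succ k ih =>
      intro p hk
      have hp0 : p ≠ 0 := fun h => by rw [h, Polynomial.natDegree_zero] at hk; omega
      have hd : (derivative p).natDegree = p.natDegree - 1 := by
        refine le_antisymm (Polynomial.natDegree_derivative_le p) ?_
        refine Polynomial.le_natDegree_of_ne_zero ?_
        rw [Polynomial.coeff_derivative]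
        have h1 : p.coeff (p.natDegree - 1 + 1) = p.leadingCoeff := by
          rw [Polynomial.leadingCoeff]
          congr 1
          omega
        rw [h1]
        have h2 : p.leadingCoeff ≠ 0 := Polynomial.leadingCoeff_ne_zero.2 hp0
        have h3 : ((p.natDegree - 1 : ℕ) : ℂ) + 1 ≠ 0 := by
          have h4 : ((p.natDegree - 1 : ℕ) : ℂ) + 1 = ((p.natDegree - 1 + 1 : ℕ) : ℂ) := by
            push_cast; ring
          rw [h4, show p.natDegree - 1 + 1 = p.natDegree from by omega]
          exact Nat.cast_ne_zero.2 (by omega)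
        exact mul_ne_zero h2 h3
      have hk' : k < (derivative p).natDegree := by omega
      obtain ⟨h1, h2⟩ := ih (derivative p) hk'
      rw [Function.iterate_succ_apply]
      exact ⟨h1, by rw [h2, hd]; omega⟩


end S13

open S13

theorem stmt13 (f : PowerSeries (PowerSeries ℂ)) (n : ℕ) (hn : 1 < n)
    -- `ord f(0,y) = n`:
    (hord : (∀ j < n, PowerSeries.coeff (R := ℂ) j
        (PowerSeries.map (PowerSeries.constantCoeff (R := ℂ)) f) = 0) ∧
      PowerSeries.coeff (R := ℂ) n (PowerSeries.map (PowerSeries.constantCoeff (R := ℂ)) f) ≠ 0)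
    (k : ℕ) (hk1 : 1 ≤ k) (hkn : k < n)
    (m : ℕ) (hm : 0 < m)
    -- Newton–Puiseux factorization of `f`:
    (αs : Fin n → PSer) (hαden : ∀ j, hasDen m (αs j)) (hαpos : ∀ j, posOrder (αs j))
    (u : (PowerSeries (PowerSeries ℂ))ˣ)
    (hufact : stretchF m f = (u : PowerSeries (PowerSeries ℂ)) *
      ∏ j : Fin n, (PowerSeries.X - PowerSeries.C (R := PowerSeries ℂ) (toPS m (αs j))))
    -- Newton–Puiseux factorization of `∂^k f/∂y^k`:
    (γs : Fin (n - k) → PSer) (hγden : ∀ j, hasDen m (γs j)) (hγpos : ∀ j, posOrder (γs j))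
    (v : (PowerSeries (PowerSeries ℂ))ˣ)
    (hvfact : stretchF m (PowerSeries.derivativeFun^[k] f) =
      (v : PowerSeries (PowerSeries ℂ)) *
      ∏ j : Fin (n - k), (PowerSeries.X - PowerSeries.C (R := PowerSeries ℂ) (toPS m (γs j))))
    -- a pseudo-ball `B` of height `r`:
    (r : ℚ) (hr : 0 < r) (β : PSer)
    -- `k < deg F_B`:
    (hdeg : k < (Finset.univ.filter (fun j => αs j ∈ pball β r)).card) :
    ∃ c : ℂ, c ≠ 0 ∧
      derivative^[k] (∏ j ∈ Finset.univ.filter (fun j => αs j ∈ pball β r),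
          (X - C (αs j r))) =
        Polynomial.C c * ∏ j ∈ Finset.univ.filter (fun j => γs j ∈ pball β r),
          (X - C (γs j r)) := by
  classical
  set d := r.den with hddef
  have hdpos : 0 < d := r.den_pos
  set m' := m * d with hm'def
  have hm'pos : 0 < m' := Nat.mul_pos hm hdpos
  have hrnum : 0 < r.num := Rat.num_pos.2 hr
  set N := m * r.num.toNat with hNdef
  have hNpos : 0 < N := Nat.mul_pos hm (by omega)
  have hNq : (N : ℚ) = r * m' := by
    have hden : ((r.den : ℚ)) ≠ 0 := by exact_mod_cast r.den_pos.ne'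
    have htn : ((r.num.toNat : ℕ) : ℚ) = ((r.num : ℤ) : ℚ) := by
      exact_mod_cast congrArg (fun z : ℤ => (z : ℚ)) (Int.toNat_of_nonneg hrnum.le)
    have hrd : r * (r.den : ℚ) = ((r.num : ℤ) : ℚ) := by
      have h0 := (div_eq_iff hden).1 (Rat.num_div_den r)
      rw [h0]
    rw [hNdef, hm'def, hddef]
    push_cast
    rw [htn, ← hrd]
    ring
  have hαden' : ∀ j, hasDen m' (αs j) := by
    intro j q hq
    obtain ⟨i, hi⟩ := hαden j q hq
    refine ⟨i * d, ?_⟩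
    have hmq : (m : ℚ) ≠ 0 := by exact_mod_cast hm.ne'
    have hm'q : ((m' : ℕ) : ℚ) ≠ 0 := by exact_mod_cast hm'pos.ne'
    rw [hi, div_eq_div_iff hmq hm'q, hm'def]
    push_cast; ring
  have hγden' : ∀ j, hasDen m' (γs j) := by
    intro j q hq
    obtain ⟨i, hi⟩ := hγden j q hq
    refine ⟨i * d, ?_⟩
    have hmq : (m : ℚ) ≠ 0 := by exact_mod_cast hm.ne'
    have hm'q : ((m' : ℕ) : ℚ) ≠ 0 := by exact_mod_cast hm'pos.ne'
    rw [hi, div_eq_div_iff hmq hm'q, hm'def]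
    push_cast; ring
  -- transported factorizations
  have hstr : ∀ h : PowerSeries (PowerSeries ℂ),
      stretchF m' h = PowerSeries.map (stretchHom d hdpos) (stretchF m h) := by
    intro h
    refine PowerSeries.ext fun j => ?_
    rw [PowerSeries.coeff_map, stretchF, stretchF, PowerSeries.coeff_mk, PowerSeries.coeff_mk,
      stretchHom_apply, stretch_stretch hdpos hm, hm'def]
  have hufact' : stretchF m' f = ((PowerSeries.map (stretchHom d hdpos)) (↑u)) *
      ∏ j : Fin n, (PowerSeries.X - PowerSeries.C (R := PowerSeries ℂ) (toPS m' (αs j))) := by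
    rw [hstr f, hufact, map_mul, map_prod]
    congr 1
    refine Finset.prod_congr rfl fun j _ => ?_
    rw [map_sub, PowerSeries.map_X, PowerSeries.map_C, stretchHom_apply,
      stretch_toPS hdpos hm _ (hαden j), hm'def]
  have hvfact' : PowerSeries.derivativeFun^[k] (stretchF m' f) =
      ((PowerSeries.map (stretchHom d hdpos)) (↑v)) *
      ∏ j : Fin (n - k), (PowerSeries.X - PowerSeries.C (R := PowerSeries ℂ) (toPS m' (γs j))) := by
    have h1 : PowerSeries.derivativeFun^[k] (stretchF m' f) =
        stretchF m' (PowerSeries.derivativeFun^[k] f) := by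
      rw [stretchF_eq_map m' hm'pos, stretchF_eq_map m' hm'pos, map_derivativeFun_iter]
    rw [h1, hstr, hvfact, map_mul, map_prod]
    congr 1
    refine Finset.prod_congr rfl fun j _ => ?_
    rw [map_sub, PowerSeries.map_X, PowerSeries.map_C, stretchHom_apply,
      stretch_toPS hdpos hm _ (hγden j), hm'def]
  -- ball structure
  set Sf := Finset.univ.filter (fun j => αs j ∈ pball β r) with hSfdef
  set Tf := Finset.univ.filter (fun j => γs j ∈ pball β r) with hTfdef
  have hSne : Sf.Nonempty := Finset.card_pos.1 (by omega)
  obtain ⟨ℓ, hℓS⟩ := hSne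
  have hℓ : ∀ q < r, β q = αs ℓ q := (Finset.mem_filter.1 hℓS).2
  -- W
  set Wb := Wd N m' β with hWbdef
  have hW0 : PowerSeries.constantCoeff (R := Polynomial ℂ) Wb = 0 := constantCoeff_Wd N m' hNpos β
  have hDzW : Dz Wb = (PowerSeries.X : PowerSeries (Polynomial ℂ)) ^ N := Dz_Wd N m' β
  -- Phi of factorizations
  have hΦg : Phi Wb (stretchF m' f) =
      Phi Wb (PowerSeries.map (stretchHom d hdpos) ↑u) *
        ∏ j : Fin n, (Wb - iT (toPS m' (αs j))) := by
    rw [← PhiHom_apply Wb hW0, hufact', map_mul, map_prod]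
    congr 1
    refine Finset.prod_congr rfl fun j _ => ?_
    rw [map_sub, PhiHom_apply, PhiHom_apply, Phi_X hW0, Phi_C]
  have hΦq : Phi Wb (PowerSeries.derivativeFun^[k] (stretchF m' f)) =
      Phi Wb (PowerSeries.map (stretchHom d hdpos) ↑v) *
        ∏ j : Fin (n - k), (Wb - iT (toPS m' (γs j))) := by
    rw [← PhiHom_apply Wb hW0, hvfact', map_mul, map_prod]
    congr 1
    refine Finset.prod_congr rfl fun j _ => ?_
    rw [map_sub, PhiHom_apply, PhiHom_apply, Phi_X hW0, Phi_C]
  -- per-factor data: α side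
  have hfacSα : ∀ j ∈ Sf,
      (∀ i < N, PowerSeries.coeff (R := Polynomial ℂ) i (Wb - iT (toPS m' (αs j))) = 0) ∧
        PowerSeries.coeff (R := Polynomial ℂ) N (Wb - iT (toPS m' (αs j))) =
          Polynomial.X - Polynomial.C (αs j r) :=
    fun j hj => factor_in hm'pos hNq hNpos (αs j) (hαpos j) ((Finset.mem_filter.1 hj).2)
  have hfacOα : ∀ j : Fin n, ∃ (e : ℕ) (c : ℂ),
      j ∉ Sf → (e < N ∧ c ≠ 0 ∧
      (∀ i < e, PowerSeries.coeff (R := Polynomial ℂ) i (Wb - iT (toPS m' (αs j))) = 0) ∧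
      PowerSeries.coeff (R := Polynomial ℂ) e (Wb - iT (toPS m' (αs j))) = Polynomial.C c) := by
    intro j
    by_cases hj : j ∈ Sf
    · exact ⟨0, 1, fun h => absurd hj h⟩
    · have hnot : ¬ (∀ q < r, β q = αs j q) := fun hcon =>
        hj (Finset.mem_filter.2 ⟨Finset.mem_univ j, hcon⟩)
      obtain ⟨e, c, h1, h2, h3, h4⟩ := factor_out hr hm'pos hNq hNpos (αs j) (αs ℓ)
        (hαden' j) (hαpos j) (hαden' ℓ) (hαpos ℓ) hℓ hnot
      exact ⟨e, c, fun _ => ⟨h1, h2, h3, h4⟩⟩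
  choose eA cA hA using hfacOα
  -- per-factor data: γ side
  have hfacSγ : ∀ j ∈ Tf,
      (∀ i < N, PowerSeries.coeff (R := Polynomial ℂ) i (Wb - iT (toPS m' (γs j))) = 0) ∧
        PowerSeries.coeff (R := Polynomial ℂ) N (Wb - iT (toPS m' (γs j))) =
          Polynomial.X - Polynomial.C (γs j r) :=
    fun j hj => factor_in hm'pos hNq hNpos (γs j) (hγpos j) ((Finset.mem_filter.1 hj).2)
  have hfacOγ : ∀ j : Fin (n - k), ∃ (e : ℕ) (c : ℂ),
      j ∉ Tf → (e < N ∧ c ≠ 0 ∧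
      (∀ i < e, PowerSeries.coeff (R := Polynomial ℂ) i (Wb - iT (toPS m' (γs j))) = 0) ∧
      PowerSeries.coeff (R := Polynomial ℂ) e (Wb - iT (toPS m' (γs j))) = Polynomial.C c) := by
    intro j
    by_cases hj : j ∈ Tf
    · exact ⟨0, 1, fun h => absurd hj h⟩
    · have hnot : ¬ (∀ q < r, β q = γs j q) := fun hcon =>
        hj (Finset.mem_filter.2 ⟨Finset.mem_univ j, hcon⟩)
      obtain ⟨e, c, h1, h2, h3, h4⟩ := factor_out hr hm'pos hNq hNpos (γs j) (αs ℓ)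
        (hγden' j) (hγpos j) (hαden' ℓ) (hαpos ℓ) hℓ hnot
      exact ⟨e, c, fun _ => ⟨h1, h2, h3, h4⟩⟩
  choose eC cC hC using hfacOγ
  -- split products
  set Scf := Finset.univ.filter (fun j => ¬ αs j ∈ pball β r) with hScfdef
  set Tcf := Finset.univ.filter (fun j => ¬ γs j ∈ pball β r) with hTcfdef
  have hScf_not : ∀ j ∈ Scf, j ∉ Sf := fun j hj hmem =>
    (Finset.mem_filter.1 hj).2 (Finset.mem_filter.1 hmem).2
  have hTcf_not : ∀ j ∈ Tcf, j ∉ Tf := fun j hj hmem =>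
    (Finset.mem_filter.1 hj).2 (Finset.mem_filter.1 hmem).2
  have hsplitα : ∏ j : Fin n, (Wb - iT (toPS m' (αs j))) =
      (∏ j ∈ Sf, (Wb - iT (toPS m' (αs j)))) *
      (∏ j ∈ Scf, (Wb - iT (toPS m' (αs j)))) :=
    (Finset.prod_filter_mul_prod_filter_not Finset.univ _ _).symm
  have hsplitγ : ∏ j : Fin (n - k), (Wb - iT (toPS m' (γs j))) =
      (∏ j ∈ Tf, (Wb - iT (toPS m' (γs j)))) *
      (∏ j ∈ Tcf, (Wb - iT (toPS m' (γs j)))) :=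
    (Finset.prod_filter_mul_prod_filter_not Finset.univ _ _).symm
  -- coefficient data for the products
  have hdataSα := coeff_prod_low Sf (fun _ => N) (fun j => Wb - iT (toPS m' (αs j)))
    (fun j hj => (hfacSα j hj).1)
  have hdataOα := coeff_prod_low Scf eA (fun j => Wb - iT (toPS m' (αs j)))
    (fun j hj => (hA j (hScf_not j hj)).2.2.1)
  have hdataSγ := coeff_prod_low Tf (fun _ => N) (fun j => Wb - iT (toPS m' (γs j)))
    (fun j hj => (hfacSγ j hj).1)
  have hdataOγ := coeff_prod_low Tcf eC (fun j => Wb - iT (toPS m' (γs j)))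
    (fun j hj => (hC j (hTcf_not j hj)).2.2.1)
  -- unit data
  have hu0val := coeff_zero_Phi Wb (PowerSeries.map (stretchHom d hdpos) ↑u)
  have hv0val := coeff_zero_Phi Wb (PowerSeries.map (stretchHom d hdpos) ↑v)
  set u₀ := PowerSeries.constantCoeff (R := ℂ) (PowerSeries.constantCoeff (R := PowerSeries ℂ)
    (PowerSeries.map (stretchHom d hdpos) (↑u : PowerSeries (PowerSeries ℂ)))) with hu₀def
  set v₀ := PowerSeries.constantCoeff (R := ℂ) (PowerSeries.constantCoeff (R := PowerSeries ℂ)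
    (PowerSeries.map (stretchHom d hdpos) (↑v : PowerSeries (PowerSeries ℂ)))) with hv₀def
  have hu₀ne : u₀ ≠ 0 := by
    have h2 : IsUnit (PowerSeries.constantCoeff (R := ℂ) (PowerSeries.constantCoeff (R := PowerSeries ℂ)
        (PowerSeries.map (stretchHom d hdpos) (↑u : PowerSeries (PowerSeries ℂ))))) :=
      (((u.isUnit).map (PowerSeries.map (stretchHom d hdpos))).map
        (PowerSeries.constantCoeff (R := PowerSeries ℂ))).map (PowerSeries.constantCoeff (R := ℂ))
    exact h2.ne_zero
  have hv₀ne : v₀ ≠ 0 := by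
    have h2 : IsUnit (PowerSeries.constantCoeff (R := ℂ) (PowerSeries.constantCoeff (R := PowerSeries ℂ)
        (PowerSeries.map (stretchHom d hdpos) (↑v : PowerSeries (PowerSeries ℂ))))) :=
      (((v.isUnit).map (PowerSeries.map (stretchHom d hdpos))).map
        (PowerSeries.constantCoeff (R := PowerSeries ℂ))).map (PowerSeries.constantCoeff (R := ℂ))
    exact h2.ne_zero
  -- assembled coefficient data for Phi g
  set EA := (∑ _j ∈ Sf, N) + ∑ j ∈ Scf, eA j with hEAdef
  set EC := (∑ _j ∈ Tf, N) + ∑ j ∈ Tcf, eC j with hECdef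
  have hcombα := coeff_mul_low (p := ∑ _j ∈ Sf, N) (q := ∑ j ∈ Scf, eA j)
    hdataSα.1 hdataOα.1
  have hcombγ := coeff_mul_low (p := ∑ _j ∈ Tf, N) (q := ∑ j ∈ Tcf, eC j)
    hdataSγ.1 hdataOγ.1
  have hglow : ∀ i < EA, PowerSeries.coeff (R := Polynomial ℂ) i (Phi Wb (stretchF m' f)) = 0 := by
    intro i hi
    rw [hΦg, hsplitα]
    have h3 := (coeff_mul_low (p := 0) (q := EA)
      (a := Phi Wb (PowerSeries.map (stretchHom d hdpos) ↑u))
      (b := (∏ j ∈ Sf, (Wb - iT (toPS m' (αs j)))) *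
        (∏ j ∈ Scf, (Wb - iT (toPS m' (αs j)))))
      (fun i hi => absurd hi (Nat.not_lt_zero i)) (fun i hi => hcombα.1 i hi)).1
    exact h3 i (by omega)
  have hqlow : ∀ i < EC, PowerSeries.coeff (R := Polynomial ℂ) i
      (Phi Wb (PowerSeries.derivativeFun^[k] (stretchF m' f))) = 0 := by
    intro i hi
    rw [hΦq, hsplitγ]
    have h3 := (coeff_mul_low (p := 0) (q := EC)
      (a := Phi Wb (PowerSeries.map (stretchHom d hdpos) ↑v))
      (b := (∏ j ∈ Tf, (Wb - iT (toPS m' (γs j)))) *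
        (∏ j ∈ Tcf, (Wb - iT (toPS m' (γs j)))))
      (fun i hi => absurd hi (Nat.not_lt_zero i)) (fun i hi => hcombγ.1 i hi)).1
    exact h3 i (by omega)
  have hgval : PowerSeries.coeff (R := Polynomial ℂ) EA (Phi Wb (stretchF m' f)) =
      Polynomial.C (u₀ * ∏ j ∈ Scf, cA j) * ∏ j ∈ Sf, (X - C (αs j r)) := by
    rw [hΦg, hsplitα]
    have h3 := (coeff_mul_low (p := 0) (q := EA)
      (a := Phi Wb (PowerSeries.map (stretchHom d hdpos) ↑u))
      (b := (∏ j ∈ Sf, (Wb - iT (toPS m' (αs j)))) *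
        (∏ j ∈ Scf, (Wb - iT (toPS m' (αs j)))))
      (fun i hi => absurd hi (Nat.not_lt_zero i)) (fun i hi => hcombα.1 i hi)).2
    rw [zero_add] at h3
    rw [h3, hu0val, hEAdef, hcombα.2, hdataSα.2, hdataOα.2]
    have e1 : ∏ j ∈ Sf, PowerSeries.coeff (R := Polynomial ℂ) N (Wb - iT (toPS m' (αs j))) =
        ∏ j ∈ Sf, (X - C (αs j r)) :=
      Finset.prod_congr rfl fun j hj => (hfacSα j hj).2
    have e2 : ∏ j ∈ Scf, PowerSeries.coeff (R := Polynomial ℂ) (eA j) (Wb - iT (toPS m' (αs j))) =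
        Polynomial.C (∏ j ∈ Scf, cA j) := by
      rw [map_prod]
      exact Finset.prod_congr rfl fun j hj => (hA j (hScf_not j hj)).2.2.2
    rw [e1, e2, Polynomial.C_mul]
    ring
  have hqval : PowerSeries.coeff (R := Polynomial ℂ) EC
      (Phi Wb (PowerSeries.derivativeFun^[k] (stretchF m' f))) =
      Polynomial.C (v₀ * ∏ j ∈ Tcf, cC j) * ∏ j ∈ Tf, (X - C (γs j r)) := by
    rw [hΦq, hsplitγ]
    have h3 := (coeff_mul_low (p := 0) (q := EC)
      (a := Phi Wb (PowerSeries.map (stretchHom d hdpos) ↑v))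
      (b := (∏ j ∈ Tf, (Wb - iT (toPS m' (γs j)))) *
        (∏ j ∈ Tcf, (Wb - iT (toPS m' (γs j)))))
      (fun i hi => absurd hi (Nat.not_lt_zero i)) (fun i hi => hcombγ.1 i hi)).2
    rw [zero_add] at h3
    rw [h3, hv0val, hECdef, hcombγ.2, hdataSγ.2, hdataOγ.2]
    have e1 : ∏ j ∈ Tf, PowerSeries.coeff (R := Polynomial ℂ) N (Wb - iT (toPS m' (γs j))) =
        ∏ j ∈ Tf, (X - C (γs j r)) :=
      Finset.prod_congr rfl fun j hj => (hfacSγ j hj).2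
    have e2 : ∏ j ∈ Tcf, PowerSeries.coeff (R := Polynomial ℂ) (eC j) (Wb - iT (toPS m' (γs j))) =
        Polynomial.C (∏ j ∈ Tcf, cC j) := by
      rw [map_prod]
      exact Finset.prod_congr rfl fun j hj => (hC j (hTcf_not j hj)).2.2.2
    rw [e1, e2, Polynomial.C_mul]
    ring
  -- chain rule
  have hkey := Dz_iter_Phi hW0 hDzW (stretchF m' f) k
  have hcoeffAll : ∀ i, derivative^[k] (PowerSeries.coeff (R := Polynomial ℂ) i (Phi Wb (stretchF m' f))) =
      PowerSeries.coeff (R := Polynomial ℂ) i ((PowerSeries.X : PowerSeries (Polynomial ℂ)) ^ (k * N) *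
        Phi Wb (PowerSeries.derivativeFun^[k] (stretchF m' f))) := by
    intro i
    rw [← coeff_Dz_iter, hkey]
  have hrdata := coeff_mul_low (p := k * N) (q := EC)
    (a := (PowerSeries.X : PowerSeries (Polynomial ℂ)) ^ (k * N))
    (b := Phi Wb (PowerSeries.derivativeFun^[k] (stretchF m' f)))
    (fun i hi => by rw [PowerSeries.coeff_X_pow, if_neg (by omega)]) hqlow
  have hrval : PowerSeries.coeff (R := Polynomial ℂ) (k * N + EC)
      ((PowerSeries.X : PowerSeries (Polynomial ℂ)) ^ (k * N) *
        Phi Wb (PowerSeries.derivativeFun^[k] (stretchF m' f))) =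
      Polynomial.C (v₀ * ∏ j ∈ Tcf, cC j) * ∏ j ∈ Tf, (X - C (γs j r)) := by
    rw [hrdata.2, PowerSeries.coeff_X_pow, if_pos rfl, one_mul, hqval]
  -- degrees
  have hFne : derivative^[k] (∏ j ∈ Sf, (X - C (αs j r))) ≠ 0 := by
    refine (iter_deriv_facts k _ ?_).1
    have hdeg2 : (∏ j ∈ Sf, (X - C (αs j r))).natDegree = Sf.card := by
      rw [Polynomial.natDegree_prod _ _ (fun j _ => Polynomial.X_sub_C_ne_zero _)]
      simp [Polynomial.natDegree_X_sub_C]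
    rw [hdeg2]
    exact hdeg
  have hGne : (∏ j ∈ Tf, (X - C (γs j r))) ≠ 0 :=
    Finset.prod_ne_zero_iff.2 fun j _ => Polynomial.X_sub_C_ne_zero _
  have hcgne : (u₀ * ∏ j ∈ Scf, cA j) ≠ 0 :=
    mul_ne_zero hu₀ne (Finset.prod_ne_zero_iff.2 fun j hj => (hA j (hScf_not j hj)).2.1)
  have hcqne : (v₀ * ∏ j ∈ Tcf, cC j) ≠ 0 :=
    mul_ne_zero hv₀ne (Finset.prod_ne_zero_iff.2 fun j hj => (hC j (hTcf_not j hj)).2.1)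
  -- compare orders
  have hEeq : EA = k * N + EC := by
    rcases lt_trichotomy EA (k * N + EC) with hlt | heq | hgt
    · exfalso
      have h1 := hcoeffAll EA
      rw [hgval, hrdata.1 EA hlt, Polynomial.iterate_derivative_C_mul] at h1
      exact mul_ne_zero (Polynomial.C_ne_zero.2 hcgne) hFne h1
    · exact heq
    · exfalso
      have h1 := hcoeffAll (k * N + EC)
      rw [hglow _ hgt, hrval, Polynomial.iterate_derivative_zero] at h1
      exact mul_ne_zero (Polynomial.C_ne_zero.2 hcqne) hGne h1.symm
  have hmain : Polynomial.C (u₀ * ∏ j ∈ Scf, cA j) *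
      derivative^[k] (∏ j ∈ Sf, (X - C (αs j r))) =
      Polynomial.C (v₀ * ∏ j ∈ Tcf, cC j) * ∏ j ∈ Tf, (X - C (γs j r)) := by
    have h1 := hcoeffAll EA
    rw [hgval, Polynomial.iterate_derivative_C_mul, hEeq, hrval] at h1
    exact h1
  refine ⟨(u₀ * ∏ j ∈ Scf, cA j)⁻¹ * (v₀ * ∏ j ∈ Tcf, cC j),
    mul_ne_zero (inv_ne_zero hcgne) hcqne, ?_⟩
  have h2 := congrArg (fun p => Polynomial.C (u₀ * ∏ j ∈ Scf, cA j)⁻¹ * p) hmain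
  rw [← mul_assoc, ← mul_assoc, ← Polynomial.C_mul, ← Polynomial.C_mul,
    inv_mul_cancel₀ hcgne, Polynomial.C_1, one_mul] at h2
  exact h2
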